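/- arXiv:1302.0146 — 3 statements merged into one kernel-verified Lean document; each statement's English description precedes it below -/
import Mathlib

section
/- Let (X,d,μ) be a metric measure space with μ a Borel measure, let m > n > 2 be real numbers, let X = E₁ ∪ E₂ ∪ K with E₁, E₂, K pairwise disjoint measurable sets, and let h : X → [1,∞) be measurable. Assume there is a constant C₀ ≥ 1 such that: (i) μ(K) ≤ C₀; (ii) C₀⁻¹ r^m ≤ μ(B(x,r)) ≤ C₀ r^m for every x ∈ X and every 0 < r ≤ 1; (iii) the uncentered Hardy–Littlewood maximal operators of the metric measure subspaces (E₁ ∪ K, d, μ) and (E₂ ∪ K, d, μ) are of weak type (1,1); (iv) μ(B) ≥ C₀⁻¹ h(x)ⁿ for every open ball B of X containing a point x ∈ E₂ with B ∩ E₁ ≠ ∅; μ(B) ≥ C₀⁻¹ h(x)ⁿ for every open ball B containing a point x ∈ E₂ with h(x) > 2 and B ∩ K ≠ ∅; and μ(B) ≥ C₀⁻¹ h(x)^m for every open ball B containing a point x ∈ E₁ with B ∩ (E₂ ∪ K) ≠ ∅; (v) μ({x ∈ E₂ : h(x) ≤ R}) ≤ C₀ Rⁿ and μ({x ∈ E₁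 : h(x) ≤ R}) ≤ C₀ R^m for every R ≥ 1. Then there exists a constant C, depending only on m, n, C₀ and the weak type (1,1) constants in (iii), such that the uncentered Hardy–Littlewood maximal operator M of (X,d,μ) satisfies μ({x ∈ X : Mf(x) > α}) ≤ C‖f‖_{L¹(μ)}/α for all f ∈ L¹(μ) and α > 0, and for every 1 < p ≤ ∞ there is C_p with ‖Mf‖_{L^p(μ)} ≤ C_p‖f‖_{L^p(μ)} for all f ∈ L^p(μ). -/
open MeasureTheory Metric ENNReal NNReal Filter

/-- The uncentered Hardy–Littlewood maximal function of `f` with respect to the measure `μ`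
on a metric space: the supremum of the averages of `|f|` over all open balls containing `x`
with finite positive measure. -/
noncomputable def uncenteredMaximal {X : Type*} [MetricSpace X] [MeasurableSpace X]
    (μ : Measure X) (f : X → ℝ) (x : X) : ℝ≥0∞ :=
  ⨆ (c : X) (r : ℝ) (_ : x ∈ ball c r) (_ : 0 < μ (ball c r)) (_ : μ (ball c r) < ∞),
    (μ (ball c r))⁻¹ * ∫⁻ y in ball c r, ‖f y‖₊ ∂μ

/-- The uncentered Hardy–Littlewood maximal function of the metric measure subspace
`(S, d, μ|_S)`: balls of the subspace are the sets `S ∩ ball c r` with `c ∈ S`. -/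
noncomputable def uncenteredMaximalOn {X : Type*} [MetricSpace X] [MeasurableSpace X]
    (μ : Measure X) (S : Set X) (f : X → ℝ) (x : X) : ℝ≥0∞ :=
  ⨆ (c : X) (_ : c ∈ S) (r : ℝ) (_ : x ∈ S ∩ ball c r)
    (_ : 0 < μ (S ∩ ball c r)) (_ : μ (S ∩ ball c r) < ∞),
    (μ (S ∩ ball c r))⁻¹ * ∫⁻ y in S ∩ ball c r, ‖f y‖₊ ∂μ

/-- The `L^p` "norm" of an `ℝ≥0∞`-valued function (ess sup for `p = ∞`). -/
noncomputable def eLpNormENNReal {X : Type*} [MeasurableSpace X] (g : X → ℝ≥0∞)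
    (p : ℝ≥0∞) (μ : Measure X) : ℝ≥0∞ :=
  if p = ∞ then essSup g μ else (∫⁻ x, g x ^ p.toReal ∂μ) ^ (1 / p.toReal)

open Set Topology

section Aux
variable {X : Type*} [MetricSpace X] [MeasurableSpace X] {μ : Measure X} {f g : X → ℝ}

theorem le_uncenteredMaximal {c : X} {r : ℝ} {x : X} (hx : x ∈ ball c r)
    (h0 : 0 < μ (ball c r)) (htop : μ (ball c r) < ∞) :
    (μ (ball c r))⁻¹ * ∫⁻ y in ball c r, ‖f y‖₊ ∂μ ≤ uncenteredMaximal μ f x := by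
  rw [uncenteredMaximal]
  exact le_iSup_of_le c <| le_iSup_of_le r <| le_iSup_of_le hx <| le_iSup_of_le h0 <|
    le_iSup_of_le htop le_rfl

theorem lt_uncenteredMaximal_iff {x : X} {a : ℝ≥0∞} :
    a < uncenteredMaximal μ f x ↔ ∃ c r, x ∈ ball c r ∧ 0 < μ (ball c r) ∧ μ (ball c r) < ∞ ∧
      a < (μ (ball c r))⁻¹ * ∫⁻ y in ball c r, ‖f y‖₊ ∂μ := by
  simp only [uncenteredMaximal, lt_iSup_iff]
  tauto

theorem uncenteredMaximal_congr_ae (hfg : f =ᵐ[μ] g) :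
    uncenteredMaximal μ f = uncenteredMaximal μ g := by
  have : ∀ s : Set X, ∫⁻ y in s, ‖f y‖₊ ∂μ = ∫⁻ y in s, ‖g y‖₊ ∂μ := by
    intro s
    refine lintegral_congr_ae (ae_restrict_of_ae ?_)
    filter_upwards [hfg] with y hy
    rw [hy]
  funext x
  simp only [uncenteredMaximal, this]

theorem uncenteredMaximal_le_add {x : X} {c : ℝ≥0∞}
    (hfg : ∀ y, (‖f y‖₊ : ℝ≥0∞) ≤ (‖g y‖₊ : ℝ≥0∞) + c) :
    uncenteredMaximal μ f x ≤ uncenteredMaximal μ g x + c := by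
  rw [uncenteredMaximal]
  refine iSup_le fun d => iSup_le fun r => iSup_le fun hx => iSup_le fun h0 => iSup_le fun htop => ?_
  have hint : ∫⁻ y in ball d r, ‖f y‖₊ ∂μ ≤ (∫⁻ y in ball d r, ‖g y‖₊ ∂μ) + c * μ (ball d r) := by
    calc ∫⁻ y in ball d r, ‖f y‖₊ ∂μ ≤ ∫⁻ y in ball d r, ((‖g y‖₊ : ℝ≥0∞) + c) ∂μ :=
          lintegral_mono fun y => hfg y
      _ = (∫⁻ y in ball d r, ‖g y‖₊ ∂μ) + c * μ (ball d r) := by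
          rw [lintegral_add_right _ measurable_const, setLIntegral_const]
  calc (μ (ball d r))⁻¹ * ∫⁻ y in ball d r, ‖f y‖₊ ∂μ
      ≤ (μ (ball d r))⁻¹ * ((∫⁻ y in ball d r, ‖g y‖₊ ∂μ) + c * μ (ball d r)) :=
        mul_le_mul_right hint _
    _ = (μ (ball d r))⁻¹ * (∫⁻ y in ball d r, ‖g y‖₊ ∂μ) + c * ((μ (ball d r))⁻¹ * μ (ball d r)) := by
        ring
    _ = (μ (ball d r))⁻¹ * (∫⁻ y in ball d r, ‖g y‖₊ ∂μ) + c := by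
        rw [ENNReal.inv_mul_cancel h0.ne' htop.ne, mul_one]
    _ ≤ uncenteredMaximal μ g x + c :=
        add_le_add_left (le_uncenteredMaximal hx h0 htop) c

theorem uncenteredMaximal_le_essSup {x : X} :
    uncenteredMaximal μ f x ≤ essSup (fun y => (‖f y‖₊ : ℝ≥0∞)) μ := by
  rw [uncenteredMaximal]
  refine iSup_le fun d => iSup_le fun r => iSup_le fun _ => iSup_le fun h0 => iSup_le fun htop => ?_
  have hint : ∫⁻ y in ball d r, ‖f y‖₊ ∂μ ≤ essSup (fun y => (‖f y‖₊ : ℝ≥0∞)) μ * μ (ball d r) := by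
    calc ∫⁻ y in ball d r, ‖f y‖₊ ∂μ
        ≤ ∫⁻ _ in ball d r, essSup (fun y => (‖f y‖₊ : ℝ≥0∞)) μ ∂μ :=
          lintegral_mono_ae (ae_restrict_of_ae (ENNReal.ae_le_essSup _))
      _ = essSup (fun y => (‖f y‖₊ : ℝ≥0∞)) μ * μ (ball d r) := setLIntegral_const _ _
  calc (μ (ball d r))⁻¹ * ∫⁻ y in ball d r, ‖f y‖₊ ∂μ
      ≤ (μ (ball d r))⁻¹ * (essSup (fun y => (‖f y‖₊ : ℝ≥0∞)) μ * μ (ball d r)) :=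
        mul_le_mul_right hint _
    _ = essSup (fun y => (‖f y‖₊ : ℝ≥0∞)) μ * ((μ (ball d r))⁻¹ * μ (ball d r)) := by ring
    _ = essSup (fun y => (‖f y‖₊ : ℝ≥0∞)) μ := by
        rw [ENNReal.inv_mul_cancel h0.ne' htop.ne, mul_one]

theorem isOpen_uncenteredMaximal_lt (t : ℝ≥0∞) :
    IsOpen {x | t < uncenteredMaximal μ f x} := by
  rw [isOpen_iff_mem_nhds]
  intro x hx
  obtain ⟨c, r, hxc, h0, htop, hlt⟩ := lt_uncenteredMaximal_iff.mp hx
  refine Filter.mem_of_superset (isOpen_ball.mem_nhds hxc) fun y hy => ?_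
  exact lt_of_lt_of_le hlt (le_uncenteredMaximal hy h0 htop)

theorem measurable_uncenteredMaximal [BorelSpace X] (f : X → ℝ) :
    Measurable (uncenteredMaximal μ f) := by
  apply measurable_of_Ioi
  intro t
  exact (isOpen_uncenteredMaximal_lt t).measurableSet

end Aux

theorem weak11 {X : Type*} [MetricSpace X] [MeasurableSpace X]
    (μ : Measure X) (m n : ℝ) (hn : 0 < n) (hm : 0 < m)
    (E₁ E₂ K : Set X)
    (hcover : E₁ ∪ E₂ ∪ K = Set.univ)
    (h : X → ℝ) (hh1 : ∀ x, 1 ≤ h x)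
    (C₀ : ℝ) (hC₀ : 1 ≤ C₀)
    (hKvol : μ K ≤ ENNReal.ofReal C₀)
    (A₁ A₂ : ℝ≥0)
    (hweak₁ : ∀ f : X → ℝ, Integrable f (μ.restrict (E₁ ∪ K)) → ∀ α : ℝ, 0 < α →
      μ ((E₁ ∪ K) ∩ {x | ENNReal.ofReal α < uncenteredMaximalOn μ (E₁ ∪ K) f x})
        ≤ A₁ * (∫⁻ y in E₁ ∪ K, ‖f y‖₊ ∂μ) / ENNReal.ofReal α)
    (hweak₂ : ∀ f : X → ℝ, Integrable f (μ.restrict (E₂ ∪ K)) → ∀ α : ℝ, 0 < α →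
      μ ((E₂ ∪ K) ∩ {x | ENNReal.ofReal α < uncenteredMaximalOn μ (E₂ ∪ K) f x})
        ≤ A₂ * (∫⁻ y in E₂ ∪ K, ‖f y‖₊ ∂μ) / ENNReal.ofReal α)
    (hbig₂₁ : ∀ (c : X) (r : ℝ) (x : X), x ∈ E₂ → x ∈ ball c r →
      (ball c r ∩ E₁).Nonempty → ENNReal.ofReal (C₀⁻¹ * h x ^ n) ≤ μ (ball c r))
    (hbig₁ : ∀ (c : X) (r : ℝ) (x : X), x ∈ E₁ → x ∈ ball c r →
      (ball c r ∩ (E₂ ∪ K)).Nonempty → ENNReal.ofReal (C₀⁻¹ * h x ^ m) ≤ μ (ball c r))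
    (hdist₂ : ∀ R : ℝ, 1 ≤ R → μ {x ∈ E₂ | h x ≤ R} ≤ ENNReal.ofReal (C₀ * R ^ n))
    (hdist₁ : ∀ R : ℝ, 1 ≤ R → μ {x ∈ E₁ | h x ≤ R} ≤ ENNReal.ofReal (C₀ * R ^ m)) :
    ∀ f : X → ℝ, Integrable f μ → ∀ α : ℝ, 0 < α →
      μ {x | ENNReal.ofReal α < uncenteredMaximal μ f x}
        ≤ (A₁ + A₂ + 3 * C₀.toNNReal ^ 2) * (∫⁻ y, ‖f y‖₊ ∂μ) / ENNReal.ofReal α := by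
  intro f hf α hα
  have hC₀0 : (0:ℝ) < C₀ := lt_of_lt_of_le one_pos hC₀
  set I := ∫⁻ y, ‖f y‖₊ ∂μ with hIdef
  have hIfin : I ≠ ∞ := by
    have := hf.hasFiniteIntegral
    rw [HasFiniteIntegral] at this
    exact this.ne
  set T₁ : Set X := (E₁ ∪ K) ∩ {x | ENNReal.ofReal α < uncenteredMaximalOn μ (E₁ ∪ K) f x}
    with hT₁def
  set T₂ : Set X := (E₂ ∪ K) ∩ {x | ENNReal.ofReal α < uncenteredMaximalOn μ (E₂ ∪ K) f x}
    with hT₂def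
  set U₁ : Set X := {x | x ∈ E₁ ∧ ENNReal.ofReal α * ENNReal.ofReal (C₀⁻¹ * h x ^ m) < I}
    with hU₁def
  set U₂ : Set X := {x | x ∈ E₂ ∧ ENNReal.ofReal α * ENNReal.ofReal (C₀⁻¹ * h x ^ n) < I}
    with hU₂def
  set UK : Set X := {x | x ∈ K ∧ ENNReal.ofReal α * ENNReal.ofReal C₀⁻¹ < I} with hUKdef
  -- the level set is covered
  have hsubset : {x | ENNReal.ofReal α < uncenteredMaximal μ f x}
      ⊆ T₁ ∪ (T₂ ∪ (U₁ ∪ (U₂ ∪ UK))) := by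
    intro x hx
    obtain ⟨c, r, hxc, h0, htop, hlt⟩ := lt_uncenteredMaximal_iff.mp hx
    have hr : 0 < r := lt_of_le_of_lt dist_nonneg (mem_ball.mp hxc)
    have hcc : c ∈ ball c r := mem_ball_self hr
    have key : ENNReal.ofReal α * μ (ball c r) < ∫⁻ y in ball c r, ‖f y‖₊ ∂μ := by
      have h2 := ENNReal.mul_lt_mul_left h0.ne' htop.ne hlt
      calc ENNReal.ofReal α * μ (ball c r)
          < ((μ (ball c r))⁻¹ * ∫⁻ y in ball c r, ‖f y‖₊ ∂μ) * μ (ball c r) := h2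
        _ = ((μ (ball c r))⁻¹ * μ (ball c r)) * ∫⁻ y in ball c r, ‖f y‖₊ ∂μ := by ring
        _ = ∫⁻ y in ball c r, ‖f y‖₊ ∂μ := by
            rw [ENNReal.inv_mul_cancel h0.ne' htop.ne, one_mul]
    have keyI : ENNReal.ofReal α * μ (ball c r) < I :=
      key.trans_le (setLIntegral_le_lintegral _ _)
    -- helper for the two subspace cases
    have subcase : ∀ S : Set X, ball c r ⊆ S →
        ENNReal.ofReal α < uncenteredMaximalOn μ S f x := by
      intro S hsub
      have hSB : S ∩ ball c r = ball c r := Set.inter_eq_self_of_subset_right hsub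
      refine lt_of_lt_of_le ?_ (le_refl (uncenteredMaximalOn μ S f x))
      rw [uncenteredMaximalOn]
      have : ENNReal.ofReal α <
          (μ (S ∩ ball c r))⁻¹ * ∫⁻ y in S ∩ ball c r, ‖f y‖₊ ∂μ := by
        rw [hSB]; exact hlt
      refine lt_of_lt_of_le this ?_
      refine le_iSup_of_le c <| le_iSup_of_le (hsub hcc) <| le_iSup_of_le r <|
        le_iSup_of_le ⟨hsub hxc, hxc⟩ <| le_iSup_of_le ?_ <| le_iSup_of_le ?_ le_rfl
      · rw [hSB]; exact h0
      · rw [hSB]; exact htop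
    by_cases h2 : (ball c r ∩ E₂) = ∅
    · -- ball inside E₁ ∪ K
      have hsub : ball c r ⊆ E₁ ∪ K := by
        intro y hy
        have hy' : y ∈ E₁ ∪ E₂ ∪ K := hcover ▸ Set.mem_univ y
        rcases hy' with (h1 | h2') | hk
        · exact Or.inl h1
        · exact absurd (Set.mem_inter hy h2') (by rw [h2]; exact Set.notMem_empty y)
        · exact Or.inr hk
      exact Or.inl ⟨hsub hxc, subcase _ hsub⟩
    · obtain ⟨z₂, hz₂b, hz₂⟩ := Set.nonempty_iff_ne_empty.mpr h2
      by_cases h1 : (ball c r ∩ E₁) = ∅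
      · have hsub : ball c r ⊆ E₂ ∪ K := by
          intro y hy
          have hy' : y ∈ E₁ ∪ E₂ ∪ K := hcover ▸ Set.mem_univ y
          rcases hy' with (h1' | h2') | hk
          · exact absurd (Set.mem_inter hy h1') (by rw [h1]; exact Set.notMem_empty y)
          · exact Or.inl h2'
          · exact Or.inr hk
        exact Or.inr (Or.inl ⟨hsub hxc, subcase _ hsub⟩)
      · obtain ⟨z₁, hz₁b, hz₁⟩ := Set.nonempty_iff_ne_empty.mpr h1
        have hxu : x ∈ E₁ ∪ E₂ ∪ K := hcover ▸ Set.mem_univ x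
        rcases hxu with (hx1 | hx2) | hxK
        · refine Or.inr (Or.inr (Or.inl ⟨hx1, ?_⟩))
          have hb := hbig₁ c r x hx1 hxc ⟨z₂, hz₂b, Or.inl hz₂⟩
          exact lt_of_le_of_lt (mul_le_mul_right hb _) keyI
        · refine Or.inr (Or.inr (Or.inr (Or.inl ⟨hx2, ?_⟩)))
          have hb := hbig₂₁ c r x hx2 hxc ⟨z₁, hz₁b, hz₁⟩
          exact lt_of_le_of_lt (mul_le_mul_right hb _) keyI
        · refine Or.inr (Or.inr (Or.inr (Or.inr ⟨hxK, ?_⟩)))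
          have hb : ENNReal.ofReal C₀⁻¹ ≤ μ (ball c r) := by
            refine le_trans ?_ (hbig₂₁ c r z₂ hz₂ hz₂b ⟨z₁, hz₁b, hz₁⟩)
            apply ENNReal.ofReal_le_ofReal
            have h1n : (1:ℝ) ≤ h z₂ ^ n := Real.one_le_rpow (hh1 z₂) hn.le
            nlinarith [inv_pos.mpr hC₀0]
          exact lt_of_le_of_lt (mul_le_mul_right hb _) keyI
  -- bound each piece
  have hT₁bound : μ T₁ ≤ ↑A₁ * I / ENNReal.ofReal α := by
    refine (hweak₁ f hf.restrict α hα).trans ?_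
    gcongr
    exact setLIntegral_le_lintegral _ _
  have hT₂bound : μ T₂ ≤ ↑A₂ * I / ENNReal.ofReal α := by
    refine (hweak₂ f hf.restrict α hα).trans ?_
    gcongr
    exact setLIntegral_le_lintegral _ _
  -- a generic bound for the ends
  have hUbound : ∀ (E : Set X) (q : ℝ), 0 < q →
      (∀ R : ℝ, 1 ≤ R → μ {x ∈ E | h x ≤ R} ≤ ENNReal.ofReal (C₀ * R ^ q)) →
      μ {x | x ∈ E ∧ ENNReal.ofReal α * ENNReal.ofReal (C₀⁻¹ * h x ^ q) < I}
        ≤ ENNReal.ofReal (C₀ ^ 2) * I / ENNReal.ofReal α := by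
    intro E q hq hdist
    set U : Set X := {x | x ∈ E ∧ ENNReal.ofReal α * ENNReal.ofReal (C₀⁻¹ * h x ^ q) < I}
    rcases Set.eq_empty_or_nonempty U with hU | ⟨x₀, hx₀⟩
    · simp [hU]
    · set Ir := I.toReal with hIr
      have hIeq : I = ENNReal.ofReal Ir := (ENNReal.ofReal_toReal hIfin).symm
      have hcond : ∀ x : X, x ∈ U → α * (C₀⁻¹ * h x ^ q) < Ir := by
        intro x hx
        have hx0 : (0:ℝ) ≤ h x := le_trans zero_le_one (hh1 x)
        have hnn : (0:ℝ) ≤ α * (C₀⁻¹ * h x ^ q) :=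
          mul_nonneg hα.le (mul_nonneg (inv_nonneg.mpr hC₀0.le) (Real.rpow_nonneg hx0 q))
        have := hx.2
        rw [hIeq, ← ENNReal.ofReal_mul hα.le] at this
        exact (ENNReal.ofReal_lt_ofReal_iff_of_nonneg hnn).mp this
      set R : ℝ := (C₀ * Ir / α) ^ q⁻¹ with hRdef
      have hbase : 1 < C₀ * Ir / α := by
        have h1 := hcond x₀ hx₀
        have h1n : (1:ℝ) ≤ h x₀ ^ q := Real.one_le_rpow (hh1 x₀) hq.le
        have h2 : α * C₀⁻¹ < Ir := by nlinarith [mul_pos hα (inv_pos.mpr hC₀0)]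
        rw [lt_div_iff₀ hα, one_mul]
        calc α = C₀ * (α * C₀⁻¹) := by field_simp
          _ < C₀ * Ir := by nlinarith
      have hbase0 : (0:ℝ) ≤ C₀ * Ir / α := by linarith
      have hR1 : 1 ≤ R := Real.one_le_rpow hbase.le (by positivity)
      have hRq : R ^ q = C₀ * Ir / α := by
        rw [hRdef, ← Real.rpow_mul hbase0, inv_mul_cancel₀ hq.ne', Real.rpow_one]
      have hsubU : U ⊆ {x ∈ E | h x ≤ R} := by
        intro x hx
        refine ⟨hx.1, ?_⟩
        by_contra hcon
        push_neg at hcon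
        have hmono : R ^ q ≤ h x ^ q := Real.rpow_le_rpow (by linarith) hcon.le hq.le
        have h2 := hcond x hx
        have h4 : C₀ * Ir / α ≤ h x ^ q := hRq ▸ hmono
        have h5 : Ir ≤ α * (C₀⁻¹ * h x ^ q) := by
          rw [div_le_iff₀ hα] at h4
          calc Ir = C₀⁻¹ * (C₀ * Ir) := by field_simp
            _ ≤ C₀⁻¹ * (h x ^ q * α) := by nlinarith [inv_pos.mpr hC₀0]
            _ = α * (C₀⁻¹ * h x ^ q) := by ring
        linarith
      calc μ U ≤ μ {x ∈ E | h x ≤ R} := measure_mono hsubU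
        _ ≤ ENNReal.ofReal (C₀ * R ^ q) := hdist R hR1
        _ = ENNReal.ofReal (C₀ ^ 2) * I / ENNReal.ofReal α := by
            rw [hRq]
            rw [show C₀ * (C₀ * Ir / α) = C₀ ^ 2 * Ir / α by ring]
            rw [ENNReal.ofReal_div_of_pos hα, ENNReal.ofReal_mul (by positivity), ← hIeq]
  have hU₁bound : μ U₁ ≤ ENNReal.ofReal (C₀ ^ 2) * I / ENNReal.ofReal α :=
    hUbound E₁ m hm hdist₁
  have hU₂bound : μ U₂ ≤ ENNReal.ofReal (C₀ ^ 2) * I / ENNReal.ofReal α :=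
    hUbound E₂ n hn hdist₂
  have hUKbound : μ UK ≤ ENNReal.ofReal (C₀ ^ 2) * I / ENNReal.ofReal α := by
    rcases Set.eq_empty_or_nonempty UK with hU | ⟨x₀, hx₀⟩
    · simp [hU]
    · have hcond := hx₀.2
      calc μ UK ≤ μ K := measure_mono fun x hx => hx.1
        _ ≤ ENNReal.ofReal C₀ := hKvol
        _ ≤ ENNReal.ofReal (C₀ ^ 2) * I / ENNReal.ofReal α := by
            rw [ENNReal.le_div_iff_mul_le (Or.inl (by simp [hα])) (Or.inl ofReal_ne_top)]
            have hstep : ENNReal.ofReal C₀ * ENNReal.ofReal α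
                = ENNReal.ofReal (C₀ ^ 2) *
                  (ENNReal.ofReal α * ENNReal.ofReal C₀⁻¹) := by
              rw [← ENNReal.ofReal_mul hα.le, ← ENNReal.ofReal_mul (by positivity : (0:ℝ) ≤ C₀ ^ 2),
                ← ENNReal.ofReal_mul hC₀0.le]
              congr 1
              field_simp
            rw [hstep]
            exact mul_le_mul_right hcond.le _
  -- put everything together
  have hsum : μ {x | ENNReal.ofReal α < uncenteredMaximal μ f x}
      ≤ ↑A₁ * I / ENNReal.ofReal α + (↑A₂ * I / ENNReal.ofReal α +
        (ENNReal.ofReal (C₀ ^ 2) * I / ENNReal.ofReal α +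
        (ENNReal.ofReal (C₀ ^ 2) * I / ENNReal.ofReal α +
         ENNReal.ofReal (C₀ ^ 2) * I / ENNReal.ofReal α))) := by
    refine le_trans (measure_mono hsubset) ?_
    refine le_trans (measure_union_le _ _) ?_
    refine add_le_add hT₁bound ?_
    refine le_trans (measure_union_le _ _) ?_
    refine add_le_add hT₂bound ?_
    refine le_trans (measure_union_le _ _) ?_
    refine add_le_add hU₁bound ?_
    refine le_trans (measure_union_le _ _) ?_
    exact add_le_add hU₂bound hUKbound
  refine hsum.trans (le_of_eq ?_)
  have hcoe : (ENNReal.ofReal (C₀ ^ 2)) = ((C₀.toNNReal ^ 2 : ℝ≥0) : ℝ≥0∞) := by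
    rw [ENNReal.ofReal_pow hC₀0.le]
    rfl
  rw [hcoe]
  push_cast
  simp only [div_eq_mul_inv]
  ring

theorem strong_from_weak {X : Type*} [MetricSpace X] [MeasurableSpace X] [BorelSpace X]
    (μ : Measure X) (hsf : SigmaFinite μ) (C : ℝ≥0)
    (hweak : ∀ f : X → ℝ, Integrable f μ → ∀ α : ℝ, 0 < α →
      μ {x | ENNReal.ofReal α < uncenteredMaximal μ f x}
        ≤ C * (∫⁻ y, ‖f y‖₊ ∂μ) / ENNReal.ofReal α)
    (p : ℝ≥0∞) (hp : 1 < p) (hptop : p ≠ ∞) :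
    ∃ Cp : ℝ≥0, ∀ f : X → ℝ, MemLp f p μ →
      eLpNormENNReal (uncenteredMaximal μ f) p μ ≤ Cp * eLpNorm f p μ := by
  haveI := hsf
  set q : ℝ := p.toReal with hqdef
  have hq1 : 1 < q := by
    rw [hqdef, ← ENNReal.toReal_one]
    exact ENNReal.toReal_strict_mono hptop hp
  have hq0 : 0 < q := by linarith
  set A : ℝ≥0∞ := ENNReal.ofReal q * (2 * C) * ENNReal.ofReal (2 ^ (q - 1) / (q - 1))
    with hAdef
  have hAtop : A ≠ ∞ := by
    rw [hAdef]
    exact ENNReal.mul_ne_top (ENNReal.mul_ne_top ENNReal.ofReal_ne_top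
      (by simp [ENNReal.mul_ne_top])) ENNReal.ofReal_ne_top
  have hArp : A ^ (1 / q) ≠ ∞ := ENNReal.rpow_ne_top_of_nonneg (by positivity) hAtop
  refine ⟨(A ^ (1 / q)).toNNReal, ?_⟩
  suffices H : ∀ f : X → ℝ, StronglyMeasurable f → MemLp f p μ →
      eLpNormENNReal (uncenteredMaximal μ f) p μ ≤ (A ^ (1 / q)).toNNReal * eLpNorm f p μ by
    intro f hf
    set g := hf.aestronglyMeasurable.mk f with hgdef
    have hfg : f =ᵐ[μ] g := hf.aestronglyMeasurable.ae_eq_mk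
    have hMeq : uncenteredMaximal μ f = uncenteredMaximal μ g := uncenteredMaximal_congr_ae hfg
    have heq : eLpNorm f p μ = eLpNorm g p μ := eLpNorm_congr_ae hfg
    rw [hMeq, heq]
    exact H g hf.aestronglyMeasurable.stronglyMeasurable_mk (hf.ae_eq hfg)
  intro f hsm hf
  have hfm : Measurable f := hsm.measurable
  set J : ℝ≥0∞ := ∫⁻ x, (‖f x‖₊ : ℝ≥0∞) ^ q ∂μ with hJdef
  have hJ : eLpNorm f p μ = J ^ (1 / q) := by
    rw [eLpNorm_eq_lintegral_rpow_enorm_toReal (by positivity) hptop]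
    rfl
  have hJtop : J ≠ ∞ := by
    have h1 := hf.2
    rw [hJ] at h1
    intro hcon
    rw [hcon, ENNReal.top_rpow_of_pos (by positivity)] at h1
    exact (lt_irrefl _ h1).elim
  -- notation for the truncated integral
  set S : ℝ → ℝ≥0∞ := fun t => ∫⁻ x in {y | t / 2 < ‖f y‖}, ‖f x‖₊ ∂μ with hSdef
  have hEt : ∀ t : ℝ, MeasurableSet {y : X | t / 2 < ‖f y‖} := fun t =>
    measurableSet_lt measurable_const hfm.norm
  -- the indicator function and its properties
  have hSbound : ∀ t : ℝ, 0 < t →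
      S t ≤ (ENNReal.ofReal ((t / 2) ^ (q - 1)))⁻¹ * J := by
    intro t ht
    set b : ℝ≥0∞ := ENNReal.ofReal ((t / 2) ^ (q - 1)) with hbdef
    have hb0 : b ≠ 0 := by
      rw [hbdef, Ne, ENNReal.ofReal_eq_zero, not_le]
      exact Real.rpow_pos_of_pos (by linarith) _
    have hptw : ∀ x ∈ {y : X | t / 2 < ‖f y‖},
        (‖f x‖₊ : ℝ≥0∞) ≤ b⁻¹ * (‖f x‖₊ : ℝ≥0∞) ^ q := by
      intro x hx
      set a : ℝ≥0∞ := (‖f x‖₊ : ℝ≥0∞) with hadef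
      have hlow : ENNReal.ofReal (t / 2) ≤ a := by
        rw [hadef, ← enorm_eq_nnnorm, ← ofReal_norm]
        exact ENNReal.ofReal_le_ofReal (le_of_lt hx)
      have ha0 : a ≠ 0 := by
        refine fun hcon => ?_
        rw [hcon] at hlow
        simp only [nonpos_iff_eq_zero, ENNReal.ofReal_eq_zero] at hlow
        have : (0:ℝ) < t / 2 := by linarith
        linarith
      have hatop : a ≠ ∞ := ENNReal.coe_ne_top
      have h2 : b ≤ a ^ (q - 1) := by
        calc b = (ENNReal.ofReal (t / 2)) ^ (q - 1) :=
              (ENNReal.ofReal_rpow_of_pos (by linarith)).symm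
          _ ≤ a ^ (q - 1) := ENNReal.rpow_le_rpow hlow (by linarith)
      have h1 : b * a ≤ a ^ q := by
        calc b * a ≤ a ^ (q - 1) * a := mul_le_mul_left h2 a
          _ = a ^ (q - 1) * a ^ (1:ℝ) := by rw [ENNReal.rpow_one]
          _ = a ^ (q - 1 + 1) := (ENNReal.rpow_add _ _ ha0 hatop).symm
          _ = a ^ q := by ring_nf
      calc a = b⁻¹ * (b * a) := by
            rw [← mul_assoc, ENNReal.inv_mul_cancel hb0 ENNReal.ofReal_ne_top, one_mul]
        _ ≤ b⁻¹ * a ^ q := mul_le_mul_right h1 _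
    calc S t ≤ ∫⁻ x in {y : X | t / 2 < ‖f y‖}, b⁻¹ * (‖f x‖₊ : ℝ≥0∞) ^ q ∂μ := by
          refine lintegral_mono_ae ((ae_restrict_iff' (hEt t)).mpr (ae_of_all _ hptw))
      _ ≤ ∫⁻ x, b⁻¹ * (‖f x‖₊ : ℝ≥0∞) ^ q ∂μ := setLIntegral_le_lintegral _ _
      _ = b⁻¹ * J := lintegral_const_mul' _ _ (by simp [hb0])
  -- the key distributional inequality
  have key : ∀ t : ℝ, 0 < t →
      μ {x | ENNReal.ofReal t < uncenteredMaximal μ f x}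
        ≤ C * S t / ENNReal.ofReal (t / 2) := by
    intro t ht
    set E : Set X := {y : X | t / 2 < ‖f y‖} with hEdef
    set f₁ : X → ℝ := E.indicator f with hf₁def
    have hf₁eq : (∫⁻ y, ‖f₁ y‖₊ ∂μ) = S t := by
      show _ = ∫⁻ x in {y | t / 2 < ‖f y‖}, (‖f x‖₊ : ℝ≥0∞) ∂μ
      rw [← lintegral_indicator (hEt t) (fun x => (‖f x‖₊ : ℝ≥0∞))]
      congr 1
      funext y
      by_cases hy : y ∈ E
      · rw [hf₁def, Set.indicator_of_mem hy, Set.indicator_of_mem hy]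
      · rw [hf₁def, Set.indicator_of_notMem hy, Set.indicator_of_notMem hy]
        simp
    have hint₁ : Integrable f₁ μ := by
      constructor
      · exact (hsm.indicator (hEt t)).aestronglyMeasurable
      · rw [HasFiniteIntegral]; change ∫⁻ y, (‖f₁ y‖₊ : ℝ≥0∞) ∂μ < ∞; rw [hf₁eq]
        refine lt_of_le_of_lt (hSbound t ht) ?_
        refine lt_top_iff_ne_top.mpr (ENNReal.mul_ne_top ?_ hJtop)
        refine ENNReal.inv_ne_top.mpr ?_
        rw [Ne, ENNReal.ofReal_eq_zero, not_le]
        exact Real.rpow_pos_of_pos (by linarith) _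
    have hpt : ∀ y, (‖f y‖₊ : ℝ≥0∞) ≤ (‖f₁ y‖₊ : ℝ≥0∞) + ENNReal.ofReal (t / 2) := by
      intro y
      by_cases hy : y ∈ E
      · rw [hf₁def, Set.indicator_of_mem hy]
        exact le_self_add
      · have : ‖f y‖ ≤ t / 2 := by
          simp only [hEdef, Set.mem_setOf_eq, not_lt] at hy
          exact hy
        calc (‖f y‖₊ : ℝ≥0∞) = ENNReal.ofReal ‖f y‖ := (ofReal_norm _).symm
          _ ≤ ENNReal.ofReal (t / 2) := ENNReal.ofReal_le_ofReal this
          _ ≤ _ := le_add_self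
    have hincl : {x | ENNReal.ofReal t < uncenteredMaximal μ f x}
        ⊆ {x | ENNReal.ofReal (t / 2) < uncenteredMaximal μ f₁ x} := by
      intro x hx
      have h2 := uncenteredMaximal_le_add (μ := μ) (x := x) hpt
      have h3 : ENNReal.ofReal (t / 2) + ENNReal.ofReal (t / 2)
          < uncenteredMaximal μ f₁ x + ENNReal.ofReal (t / 2) := by
        calc ENNReal.ofReal (t / 2) + ENNReal.ofReal (t / 2) = ENNReal.ofReal t := by
              rw [← ENNReal.ofReal_add (by linarith) (by linarith)]
              norm_num
          _ < uncenteredMaximal μ f x := hx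
          _ ≤ _ := h2
      exact (ENNReal.add_lt_add_iff_right ENNReal.ofReal_ne_top).mp h3
    calc μ {x | ENNReal.ofReal t < uncenteredMaximal μ f x}
        ≤ μ {x | ENNReal.ofReal (t / 2) < uncenteredMaximal μ f₁ x} := measure_mono hincl
      _ ≤ C * (∫⁻ y, ‖f₁ y‖₊ ∂μ) / ENNReal.ofReal (t / 2) := hweak f₁ hint₁ (t / 2) (by linarith)
      _ = C * S t / ENNReal.ofReal (t / 2) := by rw [hf₁eq]
  -- a.e. finiteness of the maximal function
  have hfin : ∀ᵐ x ∂μ, uncenteredMaximal μ f x ≠ ∞ := by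
    have hzero : μ {x | uncenteredMaximal μ f x = ∞} = 0 := by
      have hb : ∀ s : ℝ, 0 < s → μ {x | uncenteredMaximal μ f x = ∞}
          ≤ (C * J) * (ENNReal.ofReal ((s / 2) ^ q))⁻¹ := by
        intro s hs
        have h1 : μ {x | uncenteredMaximal μ f x = ∞}
            ≤ μ {x | ENNReal.ofReal s < uncenteredMaximal μ f x} := by
          refine measure_mono fun x hx => ?_
          simp only [Set.mem_setOf_eq] at hx ⊢
          rw [hx]
          exact ENNReal.ofReal_lt_top
        refine h1.trans ((key s hs).trans ?_)
        have h2 : C * S s / ENNReal.ofReal (s / 2)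
            ≤ C * ((ENNReal.ofReal ((s / 2) ^ (q - 1)))⁻¹ * J) / ENNReal.ofReal (s / 2) := by
          gcongr
          exact hSbound s hs
        refine h2.trans (le_of_eq ?_)
        have hs2 : (0:ℝ) < s / 2 := by linarith
        have hexp : ENNReal.ofReal ((s / 2) ^ q)
            = ENNReal.ofReal ((s / 2) ^ (q - 1)) * ENNReal.ofReal (s / 2) := by
          rw [← ENNReal.ofReal_mul (Real.rpow_nonneg hs2.le _)]
          congr 1
          nth_rewrite 3 [show (s/2) = (s/2) ^ (1:ℝ) by rw [Real.rpow_one]]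
          rw [← Real.rpow_add hs2]
          ring_nf
        rw [hexp, ENNReal.mul_inv (Or.inl (by simp [ENNReal.ofReal_eq_zero, not_le,
          Real.rpow_pos_of_pos hs2])) (Or.inl ENNReal.ofReal_ne_top)]
        rw [div_eq_mul_inv]
        ring
      have htend : Tendsto (fun s : ℝ => (C * J) * (ENNReal.ofReal ((s / 2) ^ q))⁻¹)
          atTop (𝓝 0) := by
        have h1 : Tendsto (fun s : ℝ => (s / 2) ^ q) atTop atTop :=
          (_root_.tendsto_rpow_atTop hq0).comp (tendsto_id.atTop_div_const (by norm_num))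
        have h2 : Tendsto (fun s : ℝ => ENNReal.ofReal ((s / 2) ^ q)) atTop (𝓝 ∞) :=
          ENNReal.tendsto_ofReal_atTop.comp h1
        have h3 : Tendsto (fun s : ℝ => (ENNReal.ofReal ((s / 2) ^ q))⁻¹) atTop (𝓝 0) := by
          have := ENNReal.tendsto_inv_iff.mpr h2
          simpa using this
        have h4 : Tendsto (fun s : ℝ => ((C : ℝ≥0∞) * J) * (ENNReal.ofReal ((s / 2) ^ q))⁻¹)
            atTop (𝓝 (((C : ℝ≥0∞) * J) * 0)) :=
          ENNReal.Tendsto.const_mul h3 (Or.inr (ENNReal.mul_ne_top ENNReal.coe_ne_top hJtop))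
        simpa using h4
      have := ge_of_tendsto htend (Filter.eventually_atTop.mpr
        ⟨1, fun s hs => hb s (by linarith)⟩)
      simpa using this
    rw [ae_iff]
    convert hzero using 2
    simp
  -- layer cake
  have hMmeas : Measurable (uncenteredMaximal μ f) := measurable_uncenteredMaximal f
  set G : X → ℝ := fun x => (uncenteredMaximal μ f x).toReal with hGdef
  have hGm : AEMeasurable G μ := hMmeas.ennreal_toReal.aemeasurable
  have hGnn : 0 ≤ᵐ[μ] G := ae_of_all _ fun x => ENNReal.toReal_nonneg
  have hLHS : ∫⁻ x, uncenteredMaximal μ f x ^ q ∂μ = ∫⁻ x, ENNReal.ofReal (G x ^ q) ∂μ := by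
    refine lintegral_congr_ae ?_
    filter_upwards [hfin] with x hx
    rw [hGdef]
    rw [← ENNReal.ofReal_rpow_of_nonneg ENNReal.toReal_nonneg hq0.le, ENNReal.ofReal_toReal hx]
  have hlayer := lintegral_rpow_eq_lintegral_meas_lt_mul μ hGnn hGm hq0
  have hset : ∀ t : ℝ, 0 ≤ t →
      μ {a | t < G a} = μ {x | ENNReal.ofReal t < uncenteredMaximal μ f x} := by
    intro t ht
    refine measure_congr ?_
    rw [Filter.eventuallyEq_set]
    filter_upwards [hfin] with x hx
    simp only [Set.mem_setOf_eq, hGdef]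
    exact (ENNReal.ofReal_lt_iff_lt_toReal ht hx).symm
  -- the measurable kernel for Tonelli
  set T : Set (ℝ × X) := {p : ℝ × X | p.1 < 2 * ‖f p.2‖} with hTdef
  have hT : MeasurableSet T :=
    measurableSet_lt measurable_fst ((hfm.norm.comp measurable_snd).const_mul 2)
  set F : ℝ → X → ℝ≥0∞ := fun t x =>
    ENNReal.ofReal (t ^ (q - 2)) * (T.indicator (fun _ => (1:ℝ≥0∞)) (t, x) * ‖f x‖₊)
    with hFdef
  have hFm : Measurable (Function.uncurry F) := by
    have h1 : Measurable fun p : ℝ × X => ENNReal.ofReal (p.1 ^ (q - 2)) := by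
      have : Measurable fun s : ℝ => ENNReal.ofReal (s ^ (q - 2)) := by fun_prop
      exact this.comp measurable_fst
    have h2 : Measurable fun p : ℝ × X => T.indicator (fun _ => (1:ℝ≥0∞)) p :=
      measurable_const.indicator hT
    have h3 : Measurable fun p : ℝ × X => (‖f p.2‖₊ : ℝ≥0∞) :=
      (hfm.comp measurable_snd).enorm
    have : Function.uncurry F = fun p : ℝ × X =>
        ENNReal.ofReal (p.1 ^ (q - 2)) * (T.indicator (fun _ => (1:ℝ≥0∞)) p * (‖f p.2‖₊ : ℝ≥0∞)) := by
      funext p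
      rfl
    rw [this]
    exact h1.mul (h2.mul h3)
  have hF1 : ∀ t : ℝ, ∫⁻ x, F t x ∂μ = ENNReal.ofReal (t ^ (q - 2)) * S t := by
    intro t
    have heq : ∀ x : X, F t x = ENNReal.ofReal (t ^ (q - 2)) *
        Set.indicator {y : X | t / 2 < ‖f y‖} (fun x => (‖f x‖₊ : ℝ≥0∞)) x := by
      intro x
      by_cases hx : t / 2 < ‖f x‖
      · have hmem : (t, x) ∈ T := by
          simp only [hTdef, Set.mem_setOf_eq]
          linarith
        rw [hFdef]
        simp only [Set.indicator_of_mem hmem, Set.indicator_of_mem (show x ∈ {y : X | t / 2 < ‖f y‖} from hx), one_mul]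
      · have hmem : (t, x) ∉ T := by
          simp only [hTdef, Set.mem_setOf_eq, not_lt]
          linarith [not_lt.mp hx]
        rw [hFdef]
        simp only [Set.indicator_of_notMem hmem,
          Set.indicator_of_notMem (show x ∉ {y : X | t / 2 < ‖f y‖} from hx), zero_mul, mul_zero]
    simp only [heq]
    rw [lintegral_const_mul' _ _ ENNReal.ofReal_ne_top,
      lintegral_indicator (hEt t) (fun x => (‖f x‖₊ : ℝ≥0∞))]
  have hIoo : ∀ c : ℝ, 0 ≤ c → (∫⁻ t in Ioo (0:ℝ) c, ENNReal.ofReal (t ^ (q - 2)))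
      = ENNReal.ofReal (c ^ (q - 1) / (q - 1)) := by
    intro c hc
    rcases eq_or_lt_of_le hc with hc0 | hc0
    · rw [← hc0]
      simp [Real.zero_rpow (show q - 1 ≠ 0 by linarith)]
    · have hint : IntegrableOn (fun t : ℝ => t ^ (q - 2)) (Ioo 0 c) volume := by
        have h1 := (intervalIntegral.intervalIntegrable_rpow'
          (show (-1:ℝ) < q - 2 by linarith) (a := 0) (b := c)).1
        exact h1.mono_set Set.Ioo_subset_Ioc_self
      have hnn : 0 ≤ᵐ[volume.restrict (Ioo (0:ℝ) c)] fun t : ℝ => t ^ (q - 2) := by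
        refine (ae_restrict_iff' measurableSet_Ioo).mpr (ae_of_all _ fun t htm => ?_)
        exact Real.rpow_nonneg htm.1.le _
      rw [← MeasureTheory.ofReal_integral_eq_lintegral_ofReal hint hnn]
      congr 1
      rw [← integral_Ioc_eq_integral_Ioo, ← intervalIntegral.integral_of_le hc,
        integral_rpow (Or.inl (by linarith : (-1:ℝ) < q - 2))]
      rw [show q - 2 + 1 = q - 1 by ring, Real.zero_rpow (show q - 1 ≠ 0 by linarith)]
      ring
  have hF2 : ∀ x : X, (∫⁻ t in Ioi (0:ℝ), F t x)
      = ENNReal.ofReal (2 ^ (q - 1) / (q - 1)) * (‖f x‖₊ : ℝ≥0∞) ^ q := by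
    intro x
    set c : ℝ := 2 * ‖f x‖ with hcdef
    have hc : 0 ≤ c := by positivity
    have heq : ∀ t : ℝ, F t x = Set.indicator (Iio c)
        (fun t => ENNReal.ofReal (t ^ (q - 2))) t * (‖f x‖₊ : ℝ≥0∞) := by
      intro t
      by_cases htx : t < c
      · rw [hFdef]
        simp only [Set.indicator_of_mem (show (t, x) ∈ T from htx),
          Set.indicator_of_mem (Set.mem_Iio.mpr htx), one_mul]
      · rw [hFdef]
        simp only [Set.indicator_of_notMem (show (t, x) ∉ T from htx),
          Set.indicator_of_notMem (fun hmem => htx (Set.mem_Iio.mp hmem)), zero_mul, mul_zero]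
    simp only [heq]
    rw [lintegral_mul_const' _ _ ENNReal.coe_ne_top]
    rw [lintegral_indicator measurableSet_Iio, Measure.restrict_restrict measurableSet_Iio,
      Set.Iio_inter_Ioi, hIoo c hc]
    -- now the algebra
    have ha : (0:ℝ) ≤ ‖f x‖ := norm_nonneg _
    have hpow : c ^ (q - 1) = 2 ^ (q - 1) * ‖f x‖ ^ (q - 1) := by
      rw [hcdef, Real.mul_rpow (by norm_num) ha]
    have hmul : ‖f x‖ ^ (q - 1) * ‖f x‖ = ‖f x‖ ^ q := by
      rcases eq_or_lt_of_le ha with h0 | h0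
      · rw [← h0]
        simp [Real.zero_rpow (show q - 1 ≠ 0 by linarith),
          Real.zero_rpow (show q ≠ 0 by linarith)]
      · rw [show ‖f x‖ ^ (q-1) * ‖f x‖ = ‖f x‖ ^ (q-1) * ‖f x‖ ^ (1:ℝ) by rw [Real.rpow_one],
          ← Real.rpow_add h0]
        ring_nf
    calc ENNReal.ofReal (c ^ (q - 1) / (q - 1)) * (‖f x‖₊ : ℝ≥0∞)
        = ENNReal.ofReal (c ^ (q - 1) / (q - 1)) * ENNReal.ofReal ‖f x‖ := by
          rw [ofReal_norm, enorm_eq_nnnorm]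
      _ = ENNReal.ofReal (c ^ (q - 1) / (q - 1) * ‖f x‖) := by
          rw [← ENNReal.ofReal_mul (div_nonneg (Real.rpow_nonneg hc _) (by linarith))]
      _ = ENNReal.ofReal (2 ^ (q - 1) / (q - 1) * ‖f x‖ ^ q) := by
          congr 1
          rw [hpow, ← hmul]
          ring
      _ = ENNReal.ofReal (2 ^ (q - 1) / (q - 1)) * ENNReal.ofReal (‖f x‖ ^ q) := by
          rw [ENNReal.ofReal_mul (div_nonneg (Real.rpow_nonneg (by norm_num) _) (by linarith))]
      _ = ENNReal.ofReal (2 ^ (q - 1) / (q - 1)) * (‖f x‖₊ : ℝ≥0∞) ^ q := by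
          rw [← enorm_eq_nnnorm, ← ofReal_norm, ENNReal.ofReal_rpow_of_nonneg ha hq0.le]
  have hswap : (∫⁻ t in Ioi (0:ℝ), ENNReal.ofReal (t ^ (q - 2)) * S t)
      = ENNReal.ofReal (2 ^ (q - 1) / (q - 1)) * J := by
    have h0 := lintegral_lintegral_swap (μ := volume.restrict (Ioi (0:ℝ))) (ν := μ)
      hFm.aemeasurable
    calc (∫⁻ t in Ioi (0:ℝ), ENNReal.ofReal (t ^ (q - 2)) * S t)
        = ∫⁻ t in Ioi (0:ℝ), ∫⁻ x, F t x ∂μ := by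
          refine lintegral_congr fun t => (hF1 t).symm
      _ = ∫⁻ x, (∫⁻ t in Ioi (0:ℝ), F t x) ∂μ := h0
      _ = ∫⁻ x, ENNReal.ofReal (2 ^ (q - 1) / (q - 1)) * (‖f x‖₊ : ℝ≥0∞) ^ q ∂μ :=
          lintegral_congr fun x => hF2 x
      _ = ENNReal.ofReal (2 ^ (q - 1) / (q - 1)) * J :=
          lintegral_const_mul' _ _ ENNReal.ofReal_ne_top
  -- main estimate
  have hpoint : ∀ t : ℝ, 0 < t →
      μ {a | t < G a} * ENNReal.ofReal (t ^ (q - 1))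
        ≤ (2 * C) * (ENNReal.ofReal (t ^ (q - 2)) * S t) := by
    intro t ht
    rw [hset t ht.le]
    refine le_trans (mul_le_mul_left (key t ht) _) (le_of_eq ?_)
    have ht2 : (0:ℝ) < t / 2 := by linarith
    have hinv : (ENNReal.ofReal (t / 2))⁻¹ = ENNReal.ofReal ((t / 2)⁻¹) :=
      (ENNReal.ofReal_inv_of_pos ht2).symm
    have hcomb : ENNReal.ofReal ((t / 2)⁻¹) * ENNReal.ofReal (t ^ (q - 1))
        = 2 * ENNReal.ofReal (t ^ (q - 2)) := by
      rw [← ENNReal.ofReal_mul (by positivity)]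
      rw [show (2:ℝ≥0∞) = ENNReal.ofReal 2 by norm_num]
      rw [← ENNReal.ofReal_mul (by norm_num)]
      congr 1
      rw [show (t / 2)⁻¹ = 2 * t⁻¹ by field_simp]
      rw [show t⁻¹ = t ^ (-1:ℝ) by rw [Real.rpow_neg_one]]
      rw [mul_assoc, ← Real.rpow_add ht]
      ring_nf
    rw [div_eq_mul_inv, hinv]
    calc ↑C * S t * ENNReal.ofReal ((t / 2)⁻¹) * ENNReal.ofReal (t ^ (q - 1))
        = ↑C * S t * (ENNReal.ofReal ((t / 2)⁻¹) * ENNReal.ofReal (t ^ (q - 1))) := by ring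
      _ = ↑C * S t * (2 * ENNReal.ofReal (t ^ (q - 2))) := by rw [hcomb]
      _ = (2 * C) * (ENNReal.ofReal (t ^ (q - 2)) * S t) := by ring
  have hMain : ∫⁻ x, uncenteredMaximal μ f x ^ q ∂μ ≤ A * J := by
    calc ∫⁻ x, uncenteredMaximal μ f x ^ q ∂μ
        = ENNReal.ofReal q * ∫⁻ t in Ioi (0:ℝ),
            μ {a | t < G a} * ENNReal.ofReal (t ^ (q - 1)) := by rw [hLHS, hlayer]
      _ ≤ ENNReal.ofReal q * ∫⁻ t in Ioi (0:ℝ),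
            (2 * C) * (ENNReal.ofReal (t ^ (q - 2)) * S t) := by
          refine mul_le_mul_right ?_ _
          refine lintegral_mono_ae ((ae_restrict_iff' measurableSet_Ioi).mpr
            (ae_of_all _ fun t ht => hpoint t ht))
      _ = ENNReal.ofReal q * ((2 * C) *
            ∫⁻ t in Ioi (0:ℝ), ENNReal.ofReal (t ^ (q - 2)) * S t) := by
          rw [lintegral_const_mul' _ _ (by simp [ENNReal.mul_ne_top])]
      _ = ENNReal.ofReal q * ((2 * C) * (ENNReal.ofReal (2 ^ (q - 1) / (q - 1)) * J)) := by
          rw [hswap]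
      _ = A * J := by rw [hAdef]; ring
  -- conclude
  rw [eLpNormENNReal, if_neg hptop, hJ, ← hqdef]
  calc (∫⁻ x, uncenteredMaximal μ f x ^ q ∂μ) ^ (1 / q)
      ≤ (A * J) ^ (1 / q) := ENNReal.rpow_le_rpow hMain (by positivity)
    _ = A ^ (1 / q) * J ^ (1 / q) := ENNReal.mul_rpow_of_nonneg _ _ (by positivity)
    _ = ↑(A ^ (1 / q)).toNNReal * J ^ (1 / q) := by rw [ENNReal.coe_toNNReal hArp]

theorem statement0
    {X : Type*} [MetricSpace X] [MeasurableSpace X] [BorelSpace X]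
    (μ : Measure X) (m n : ℝ) (hn : 2 < n) (hnm : n < m)
    (E₁ E₂ K : Set X) (hE₁ : MeasurableSet E₁) (hE₂ : MeasurableSet E₂)
    (hK : MeasurableSet K)
    (hd₁₂ : Disjoint E₁ E₂) (hd₁K : Disjoint E₁ K) (hd₂K : Disjoint E₂ K)
    (hcover : E₁ ∪ E₂ ∪ K = Set.univ)
    (h : X → ℝ) (hh_meas : Measurable h) (hh1 : ∀ x, 1 ≤ h x)
    (C₀ : ℝ) (hC₀ : 1 ≤ C₀)
    -- (i) the central part has finite measure
    (hKvol : μ K ≤ ENNReal.ofReal C₀)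
    -- (ii) volume of small balls
    (hball_low : ∀ (x : X) (r : ℝ), 0 < r → r ≤ 1 →
      ENNReal.ofReal (C₀⁻¹ * r ^ m) ≤ μ (ball x r))
    (hball_up : ∀ (x : X) (r : ℝ), 0 < r → r ≤ 1 →
      μ (ball x r) ≤ ENNReal.ofReal (C₀ * r ^ m))
    -- (iii) the maximal operators of the subspaces `E₁ ∪ K` and `E₂ ∪ K`
    -- are of weak type (1,1), with constants `A₁`, `A₂`
    (A₁ A₂ : ℝ≥0)
    (hweak₁ : ∀ f : X → ℝ, Integrable f (μ.restrict (E₁ ∪ K)) → ∀ α : ℝ, 0 < α →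
      μ ((E₁ ∪ K) ∩ {x | ENNReal.ofReal α < uncenteredMaximalOn μ (E₁ ∪ K) f x})
        ≤ A₁ * (∫⁻ y in E₁ ∪ K, ‖f y‖₊ ∂μ) / ENNReal.ofReal α)
    (hweak₂ : ∀ f : X → ℝ, Integrable f (μ.restrict (E₂ ∪ K)) → ∀ α : ℝ, 0 < α →
      μ ((E₂ ∪ K) ∩ {x | ENNReal.ofReal α < uncenteredMaximalOn μ (E₂ ∪ K) f x})
        ≤ A₂ * (∫⁻ y in E₂ ∪ K, ‖f y‖₊ ∂μ) / ENNReal.ofReal α)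
    -- (iv) lower volume bounds for balls joining different parts
    (hbig₂₁ : ∀ (c : X) (r : ℝ) (x : X), x ∈ E₂ → x ∈ ball c r →
      (ball c r ∩ E₁).Nonempty → ENNReal.ofReal (C₀⁻¹ * h x ^ n) ≤ μ (ball c r))
    (hbig₂K : ∀ (c : X) (r : ℝ) (x : X), x ∈ E₂ → 2 < h x → x ∈ ball c r →
      (ball c r ∩ K).Nonempty → ENNReal.ofReal (C₀⁻¹ * h x ^ n) ≤ μ (ball c r))
    (hbig₁ : ∀ (c : X) (r : ℝ) (x : X), x ∈ E₁ → x ∈ ball c r →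
      (ball c r ∩ (E₂ ∪ K)).Nonempty → ENNReal.ofReal (C₀⁻¹ * h x ^ m) ≤ μ (ball c r))
    -- (v) distribution of `h` on the two ends
    (hdist₂ : ∀ R : ℝ, 1 ≤ R → μ {x ∈ E₂ | h x ≤ R} ≤ ENNReal.ofReal (C₀ * R ^ n))
    (hdist₁ : ∀ R : ℝ, 1 ≤ R → μ {x ∈ E₁ | h x ≤ R} ≤ ENNReal.ofReal (C₀ * R ^ m)) :
    -- conclusion: weak type (1,1) and `L^p` boundedness of the maximal operator of `X`
    (∃ C : ℝ≥0, ∀ f : X → ℝ, Integrable f μ → ∀ α : ℝ, 0 < α →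
      μ {x | ENNReal.ofReal α < uncenteredMaximal μ f x}
        ≤ C * (∫⁻ y, ‖f y‖₊ ∂μ) / ENNReal.ofReal α) ∧
    (∀ p : ℝ≥0∞, 1 < p → ∃ Cp : ℝ≥0, ∀ f : X → ℝ, MemLp f p μ →
      eLpNormENNReal (uncenteredMaximal μ f) p μ ≤ Cp * eLpNorm f p μ) := by
  have hn0 : (0:ℝ) < n := by linarith
  have hm0 : (0:ℝ) < m := by linarith
  have hweakC := weak11 μ m n hn0 hm0 E₁ E₂ K hcover h hh1 C₀ hC₀ hKvol A₁ A₂ hweak₁ hweak₂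
    hbig₂₁ hbig₁ hdist₂ hdist₁
  have hsf : SigmaFinite μ := by
    refine ⟨⟨⟨fun k => {x ∈ E₁ | h x ≤ (k:ℝ) + 1} ∪ ({x ∈ E₂ | h x ≤ (k:ℝ) + 1} ∪ K),
      fun _ => Set.mem_univ _, fun k => ?_, ?_⟩⟩⟩
    · have hk1 : (1:ℝ) ≤ (k:ℝ) + 1 := by
        have : (0:ℝ) ≤ (k:ℝ) := Nat.cast_nonneg k
        linarith
      refine lt_of_le_of_lt (measure_union_le _ _) ?_
      refine ENNReal.add_lt_top.mpr ⟨lt_of_le_of_lt (hdist₁ _ hk1) ENNReal.ofReal_lt_top, ?_⟩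
      refine lt_of_le_of_lt (measure_union_le _ _) ?_
      exact ENNReal.add_lt_top.mpr ⟨lt_of_le_of_lt (hdist₂ _ hk1) ENNReal.ofReal_lt_top,
        lt_of_le_of_lt hKvol ENNReal.ofReal_lt_top⟩
    · rw [Set.eq_univ_iff_forall]
      intro x
      obtain ⟨k, hk⟩ := exists_nat_ge (h x)
      have hx : x ∈ E₁ ∪ E₂ ∪ K := hcover ▸ Set.mem_univ x
      rcases hx with (h1 | h2) | hK'
      · exact Set.mem_iUnion.mpr ⟨k, Or.inl ⟨h1, by linarith⟩⟩
      · exact Set.mem_iUnion.mpr ⟨k, Or.inr (Or.inl ⟨h2, by linarith⟩)⟩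
      · exact Set.mem_iUnion.mpr ⟨k, Or.inr (Or.inr hK')⟩
  refine ⟨⟨A₁ + A₂ + 3 * C₀.toNNReal ^ 2, hweakC⟩, ?_⟩
  intro p hp
  by_cases hptop : p = ∞
  · subst hptop
    refine ⟨1, fun f hf => ?_⟩
    rw [eLpNormENNReal, if_pos rfl, eLpNorm_exponent_top, ENNReal.coe_one, one_mul]
    refine essSup_le_of_ae_le _ (ae_of_all _ fun x => ?_)
    exact uncenteredMaximal_le_essSup
  · exact strong_from_weak μ hsf _ hweakC p hp hptop
end

section
/- Let (X,d,μ) be a metric measure space with μ a Borel measure. Assume there are constants C₀ ≥ 1 and v₀ > 0 such that μ(B(x,2r)) ≤ C₀ μ(B(x,r)) for every x ∈ X and every 0 < r ≤ 4, and μ(B(x,1)) ≥ v₀ for every x ∈ X. Then there is a constant C, depending only on C₀, such that for every f ∈ L¹(μ) and every α > 0 with α ≥ ‖f‖_{L¹(μ)}/v₀, one has μ({x ∈ X : Mf(x) > α}) ≤ C ‖f‖_{L¹(μ)}/α, where M is the uncentered Hardy–Littlewood maximal operator of (X,d,μ). -/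
open MeasureTheory Metric ENNReal NNReal Filter

theorem statement2
    {X : Type*} [MetricSpace X] [MeasurableSpace X] [BorelSpace X]
    (μ : Measure X) (C₀ v₀ : ℝ) (hC₀ : 1 ≤ C₀) (hv₀ : 0 < v₀)
    -- local doubling
    (hdouble : ∀ (x : X) (r : ℝ), 0 < r → r ≤ 4 →
      μ (ball x (2 * r)) ≤ ENNReal.ofReal C₀ * μ (ball x r))
    -- unit balls have measure at least `v₀`
    (hunit : ∀ x : X, ENNReal.ofReal v₀ ≤ μ (ball x 1)) :
    ∃ C : ℝ≥0, ∀ f : X → ℝ, Integrable f μ → ∀ α : ℝ, 0 < α →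
      (∫⁻ y, ‖f y‖₊ ∂μ) / ENNReal.ofReal v₀ ≤ ENNReal.ofReal α →
      μ {x | ENNReal.ofReal α < uncenteredMaximal μ f x}
        ≤ C * (∫⁻ y, ‖f y‖₊ ∂μ) / ENNReal.ofReal α := by
  refine ⟨C₀.toNNReal ^ 3, ?_⟩
  intro f hf α hα h
  set I := ∫⁻ y, ‖f y‖₊ ∂μ with hIdef
  have hαne : ENNReal.ofReal α ≠ 0 := by
    simp [ENNReal.ofReal_eq_zero, not_le, hα]
  have hαtop : ENNReal.ofReal α ≠ ∞ := ENNReal.ofReal_ne_top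
  have hv₀ne : ENNReal.ofReal v₀ ≠ 0 := by
    simp [ENNReal.ofReal_eq_zero, not_le, hv₀]
  have hIle : I ≤ ENNReal.ofReal α * ENNReal.ofReal v₀ :=
    (ENNReal.div_le_iff_le_mul (Or.inl hv₀ne) (Or.inl ENNReal.ofReal_ne_top)).1 h
  -- the family of candidate balls
  set t : Set (X × ℝ) := {p | 0 < p.2 ∧ p.2 ≤ 1 ∧
      ENNReal.ofReal α * μ (ball p.1 p.2) < ∫⁻ y in ball p.1 p.2, ‖f y‖₊ ∂μ} with htdef
  -- every point of the superlevel set lies in a ball of the family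
  have hcover : {x | ENNReal.ofReal α < uncenteredMaximal μ f x} ⊆
      ⋃ p ∈ t, ball p.1 p.2 := by
    intro x hx
    simp only [Set.mem_setOf_eq, uncenteredMaximal, lt_iSup_iff] at hx
    obtain ⟨c, r, hxb, hpos, hfin, hlt⟩ := hx
    rw [mul_comm, ← div_eq_mul_inv] at hlt
    have hkey : ENNReal.ofReal α * μ (ball c r) < ∫⁻ y in ball c r, ‖f y‖₊ ∂μ :=
      (ENNReal.lt_div_iff_mul_lt (Or.inl hpos.ne') (Or.inl hfin.ne)).1 hlt
    have hIb : (∫⁻ y in ball c r, ‖f y‖₊ ∂μ) ≤ I :=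
      lintegral_mono' Measure.restrict_le_self le_rfl
    have hmuv : μ (ball c r) < ENNReal.ofReal v₀ := by
      have : ENNReal.ofReal α * μ (ball c r) < ENNReal.ofReal α * ENNReal.ofReal v₀ :=
        lt_of_lt_of_le hkey (hIb.trans hIle)
      exact (ENNReal.mul_lt_mul_iff_right hαne hαtop).1 this
    have hr1 : r ≤ 1 := by
      by_contra hr
      push_neg at hr
      have : ENNReal.ofReal v₀ ≤ μ (ball c r) :=
        (hunit c).trans (measure_mono (ball_subset_ball hr.le))
      exact absurd (this.trans_lt hmuv) (lt_irrefl _)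
    exact Set.mem_biUnion (show (c, r) ∈ t from ⟨pos_of_mem_ball hxb, hr1, hkey⟩) hxb
  -- Vitali covering lemma
  obtain ⟨u, hut, hdisj, hcov⟩ :=
    Vitali.exists_disjoint_subfamily_covering_enlargement_closedBall t Prod.fst Prod.snd 1
      (fun p hp => hp.2.1) 5 (by norm_num)
  -- open balls of the subfamily are pairwise disjoint
  have hdisj' : u.PairwiseDisjoint fun p : X × ℝ => ball p.1 p.2 :=
    hdisj.mono_on fun p _ => ball_subset_closedBall
  -- sum of the measures of the balls of any finite subfamily is controlled
  have hsum : ∀ s : Finset (X × ℝ), ↑s ⊆ u →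
      ∑ p ∈ s, ENNReal.ofReal α * μ (ball p.1 p.2) ≤ I := by
    intro s hs
    have hmem : ∀ p ∈ s, p ∈ t := fun p hp => hut (hs hp)
    calc ∑ p ∈ s, ENNReal.ofReal α * μ (ball p.1 p.2)
        ≤ ∑ p ∈ s, ∫⁻ y in ball p.1 p.2, ‖f y‖₊ ∂μ :=
          Finset.sum_le_sum fun p hp => ((hmem p hp).2.2).le
      _ = ∫⁻ y in ⋃ p ∈ s, ball p.1 p.2, ‖f y‖₊ ∂μ := by
          rw [lintegral_biUnion_finset (hdisj'.subset hs) (fun p _ => measurableSet_ball)]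
      _ ≤ I := lintegral_mono' Measure.restrict_le_self le_rfl
  have htsum : ENNReal.ofReal α * ∑' p : u, μ (ball p.1.1 p.1.2) ≤ I := by
    rw [← ENNReal.tsum_mul_left, ENNReal.tsum_eq_iSup_sum]
    refine iSup_le fun s => ?_
    classical
    have heq : ∑ p ∈ s.image Subtype.val, ENNReal.ofReal α * μ (ball p.1 p.2)
        = ∑ p ∈ s, ENNReal.ofReal α * μ (ball (↑p : X × ℝ).1 (↑p : X × ℝ).2) :=
      Finset.sum_image fun x _ y _ h => Subtype.coe_injective h
    rw [← heq]
    refine hsum _ ?_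
    intro p hp
    simp only [Finset.coe_image, Set.mem_image] at hp
    obtain ⟨q, _, rfl⟩ := hp
    exact q.2
  have hIfin : I ≠ ∞ := hf.2.ne
  -- countability of the disjoint subfamily
  have hucount : u.Countable := by
    rw [← Set.countable_coe_iff]
    have htne : (∑' p : u, μ (ball p.1.1 p.1.2)) ≠ ∞ := by
      intro htop
      rw [htop, ENNReal.mul_top hαne] at htsum
      exact absurd (top_le_iff.1 htsum) hIfin
    have := Summable.countable_support_ennreal htne
    have hall : (Function.support fun p : u => μ (ball p.1.1 p.1.2)) = Set.univ := by
      ext p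
      simp only [Function.mem_support, Set.mem_univ, iff_true]
      -- positivity of μ (ball p) from membership in t
      intro hzero
      have hpt := hut p.2
      have := hpt.2.2
      rw [hzero, mul_zero] at this
      have h0 : (∫⁻ y in ball p.1.1 p.1.2, ‖f y‖₊ ∂μ) = 0 := by
        rw [Measure.restrict_eq_zero.2 hzero]
        simp
      rw [h0] at this
      exact absurd this (lt_irrefl _)
    rw [hall] at this
    exact Set.countable_univ_iff.1 this
  -- the superlevel set is covered by the 8× enlarged balls
  have hcover8 : {x | ENNReal.ofReal α < uncenteredMaximal μ f x} ⊆
      ⋃ p ∈ u, ball p.1 (8 * p.2) := by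
    intro x hx
    obtain ⟨_, ⟨p, rfl⟩, hp⟩ := hcover hx
    simp only [Set.mem_iUnion, exists_prop] at hp
    obtain ⟨hpt, hxp⟩ := hp
    obtain ⟨q, hqu, hsub⟩ := hcov p hpt
    have hq2 : 0 < q.2 := (hut hqu).1
    refine Set.mem_biUnion hqu ?_
    have : x ∈ closedBall q.1 (5 * q.2) := hsub (ball_subset_closedBall hxp)
    exact (closedBall_subset_ball (by linarith)) this
  -- triple doubling for the enlarged balls
  have hdub3 : ∀ p ∈ u, μ (ball p.1 (8 * p.2)) ≤
      ENNReal.ofReal C₀ ^ 3 * μ (ball p.1 p.2) := by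
    intro p hpu
    have hpt := hut hpu
    have h1 : (0:ℝ) < p.2 := hpt.1
    have h2 : p.2 ≤ 1 := hpt.2.1
    have d1 : μ (ball p.1 (2 * p.2)) ≤ ENNReal.ofReal C₀ * μ (ball p.1 p.2) :=
      hdouble p.1 p.2 h1 (by linarith)
    have d2 : μ (ball p.1 (4 * p.2)) ≤ ENNReal.ofReal C₀ * μ (ball p.1 (2 * p.2)) := by
      have := hdouble p.1 (2 * p.2) (by linarith) (by linarith)
      rwa [show 2 * (2 * p.2) = 4 * p.2 by ring] at this
    have d3 : μ (ball p.1 (8 * p.2)) ≤ ENNReal.ofReal C₀ * μ (ball p.1 (4 * p.2)) := by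
      have := hdouble p.1 (4 * p.2) (by linarith) (by linarith)
      rwa [show 2 * (4 * p.2) = 8 * p.2 by ring] at this
    calc μ (ball p.1 (8 * p.2)) ≤ ENNReal.ofReal C₀ * μ (ball p.1 (4 * p.2)) := d3
      _ ≤ ENNReal.ofReal C₀ * (ENNReal.ofReal C₀ * μ (ball p.1 (2 * p.2))) := by gcongr
      _ ≤ ENNReal.ofReal C₀ * (ENNReal.ofReal C₀ * (ENNReal.ofReal C₀ * μ (ball p.1 p.2))) := by
          gcongr
      _ = ENNReal.ofReal C₀ ^ 3 * μ (ball p.1 p.2) := by ring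
  -- put everything together
  have hmain : μ {x | ENNReal.ofReal α < uncenteredMaximal μ f x} ≤
      ENNReal.ofReal C₀ ^ 3 * (I / ENNReal.ofReal α) := by
    calc μ {x | ENNReal.ofReal α < uncenteredMaximal μ f x}
        ≤ μ (⋃ p ∈ u, ball p.1 (8 * p.2)) := measure_mono hcover8
      _ ≤ ∑' p : u, μ (ball p.1.1 (8 * p.1.2)) := measure_biUnion_le μ hucount _
      _ ≤ ∑' p : u, ENNReal.ofReal C₀ ^ 3 * μ (ball p.1.1 p.1.2) :=
          ENNReal.tsum_le_tsum fun p => hdub3 p.1 p.2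
      _ = ENNReal.ofReal C₀ ^ 3 * ∑' p : u, μ (ball p.1.1 p.1.2) := ENNReal.tsum_mul_left
      _ ≤ ENNReal.ofReal C₀ ^ 3 * (I / ENNReal.ofReal α) := by
          gcongr
          exact (ENNReal.le_div_iff_mul_le (Or.inl hαne) (Or.inl hαtop)).2
            (by rwa [mul_comm] at htsum)
  have hC : ((C₀.toNNReal ^ 3 : ℝ≥0) : ℝ≥0∞) = ENNReal.ofReal C₀ ^ 3 := by
    rw [ENNReal.ofReal]
    push_cast
    ring
  rw [hC, mul_div_assoc]
  exact hmain
end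

section
/- Let (X,d,μ) be a metric measure space with μ a Borel measure, let E and S be disjoint measurable subsets of X, let s > 0, C₀ ≥ 1, and let h : E → [1,∞) be measurable. Assume: (i) every open ball B of X with B ∩ S ≠ ∅ that contains a point x ∈ E satisfies μ(B) ≥ C₀⁻¹ h(x)^s; (ii) μ({x ∈ E : h(x) ≤ R}) ≤ C₀ R^s for every R ≥ 1. Then there is a constant C = C(C₀) such that for every f ∈ L¹(μ) vanishing μ-almost everywhere outside S and every α > 0, μ({x ∈ E : Mf(x) > α}) ≤ C ‖f‖_{L¹(μ)}/α, where M is the uncentered Hardy–Littlewood maximal operator of (X,d,μ). -/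
open MeasureTheory Metric ENNReal NNReal Filter

theorem statement11
    {X : Type*} [MetricSpace X] [MeasurableSpace X] [BorelSpace X]
    (μ : Measure X) (E S : Set X) (hE : MeasurableSet E) (hS : MeasurableSet S)
    (hES : Disjoint E S)
    (s C₀ : ℝ) (hs : 0 < s) (hC₀ : 1 ≤ C₀)
    (h : X → ℝ) (hh_meas : Measurable (E.restrict h)) (hh1 : ∀ x ∈ E, 1 ≤ h x)
    -- (i) every open ball meeting `S` and containing a point `x ∈ E` has measure
    -- at least `C₀⁻¹ h(x)^s`
    (hball : ∀ (c : X) (r : ℝ), ∀ x ∈ E, x ∈ ball c r → (ball c r ∩ S).Nonempty →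
      ENNReal.ofReal (C₀⁻¹ * h x ^ s) ≤ μ (ball c r))
    -- (ii) distribution of `h` on `E`
    (hdist : ∀ R : ℝ, 1 ≤ R → μ {x ∈ E | h x ≤ R} ≤ ENNReal.ofReal (C₀ * R ^ s)) :
    ∃ C : ℝ≥0, ∀ f : X → ℝ, Integrable f μ → (∀ᵐ y ∂μ, y ∉ S → f y = 0) →
      ∀ α : ℝ, 0 < α →
        μ {x ∈ E | ENNReal.ofReal α < uncenteredMaximal μ f x}
          ≤ C * (∫⁻ y, ‖f y‖₊ ∂μ) / ENNReal.ofReal α := by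
  have hC₀pos : (0:ℝ) < C₀ := lt_of_lt_of_le one_pos hC₀
  refine ⟨(C₀ ^ 2).toNNReal, ?_⟩
  intro f hf hf0 α hα
  set I := ∫⁻ y, ‖f y‖₊ ∂μ with hIdef
  have hIfin : I ≠ ∞ := hf.2.ne
  set K : ℝ := C₀ * I.toReal / α with hKdef
  have hK0 : 0 ≤ K := by positivity
  -- key inclusion
  have hsub : {x ∈ E | ENNReal.ofReal α < uncenteredMaximal μ f x}
      ⊆ {x ∈ E | h x ≤ K ^ s⁻¹} := by
    rintro x ⟨hxE, hx⟩
    simp only [uncenteredMaximal, lt_iSup_iff] at hx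
    obtain ⟨c, r, hxb, h0, hfin, hlt⟩ := hx
    set B := ball c r
    set J := ∫⁻ y in B, (‖f y‖₊ : ℝ≥0∞) ∂μ with hJdef
    have hmul : ENNReal.ofReal α * μ B < J := by
      rw [← ENNReal.div_eq_inv_mul] at hlt
      exact (ENNReal.lt_div_iff_mul_lt (Or.inl h0.ne') (Or.inl hfin.ne)).mp hlt
    have hJpos : 0 < J := by
      refine lt_of_le_of_lt ?_ hmul
      exact le_of_eq rfl |>.trans zero_le
    -- the ball meets S
    have hBS : (B ∩ S).Nonempty := by
      by_contra hne
      rw [Set.not_nonempty_iff_eq_empty] at hne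
      have hzero : J = 0 := by
        rw [hJdef]
        refine lintegral_eq_zero_iff' ?_ |>.mpr ?_ |>.symm ▸ rfl
        · exact (AEMeasurable.nnnorm hf.aemeasurable).coe_nnreal_ennreal.restrict
        · filter_upwards [ae_restrict_of_ae hf0,
            ae_restrict_mem measurableSet_ball] with y hy hyB
          have hyS : y ∉ S := fun hyS => Set.eq_empty_iff_forall_notMem.mp hne y ⟨hyB, hyS⟩
          simp [hy hyS]
      have : ¬ (0 < J) := by simp [hzero]
      have hpos : 0 < ENNReal.ofReal α * μ B :=
        ENNReal.mul_pos (ENNReal.ofReal_pos.mpr hα).ne' h0.ne'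
      exact this (lt_trans hpos hmul)
    have hlow : ENNReal.ofReal (C₀⁻¹ * h x ^ s) ≤ μ B := hball c r x hxE hxb hBS
    have hle : ENNReal.ofReal (α * (C₀⁻¹ * h x ^ s)) ≤ I := by
      rw [ENNReal.ofReal_mul hα.le]
      calc ENNReal.ofReal α * ENNReal.ofReal (C₀⁻¹ * h x ^ s)
          ≤ ENNReal.ofReal α * μ B := by gcongr
        _ ≤ J := hmul.le
        _ ≤ I := setLIntegral_le_lintegral _ _
    have hle' : α * (C₀⁻¹ * h x ^ s) ≤ I.toReal :=
      (ENNReal.ofReal_le_iff_le_toReal hIfin).mp hle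
    have hpow : h x ^ s ≤ K := by
      rw [hKdef, le_div_iff₀ hα]
      have h2 : C₀ * (α * (C₀⁻¹ * h x ^ s)) = h x ^ s * α := by
        field_simp
      linarith [mul_le_mul_of_nonneg_left hle' hC₀pos.le]
    have hx0 : (0:ℝ) ≤ h x := le_trans zero_le_one (hh1 x hxE)
    have : (h x ^ s) ^ s⁻¹ ≤ K ^ s⁻¹ :=
      Real.rpow_le_rpow (Real.rpow_nonneg hx0 s) hpow (by positivity)
    rw [Real.rpow_rpow_inv hx0 hs.ne'] at this
    exact ⟨hxE, this⟩
  rcases le_or_gt 1 (K ^ s⁻¹) with hR | hR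
  · calc μ {x ∈ E | ENNReal.ofReal α < uncenteredMaximal μ f x}
        ≤ μ {x ∈ E | h x ≤ K ^ s⁻¹} := measure_mono hsub
      _ ≤ ENNReal.ofReal (C₀ * (K ^ s⁻¹) ^ s) := hdist _ hR
      _ = ENNReal.ofReal (C₀ * K) := by rw [Real.rpow_inv_rpow hK0 hs.ne']
      _ ≤ ↑(C₀ ^ 2).toNNReal * I / ENNReal.ofReal α := by
          have hcoe : (↑(C₀ ^ 2).toNNReal : ℝ≥0∞) = ENNReal.ofReal (C₀ ^ 2) := rfl
          rw [hcoe, ← ENNReal.ofReal_toReal hIfin, ← ENNReal.ofReal_mul (by positivity),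
            ← ENNReal.ofReal_div_of_pos hα]
          apply ENNReal.ofReal_le_ofReal
          rw [hKdef]
          ring_nf
          exact le_of_eq (by ring)
  · have hempty : {x ∈ E | ENNReal.ofReal α < uncenteredMaximal μ f x} = ∅ := by
      rw [Set.eq_empty_iff_forall_notMem]
      intro x hx
      have h1 : 1 ≤ h x := hh1 x hx.1
      have h2 : h x ≤ K ^ s⁻¹ := (hsub hx).2
      linarith
    rw [hempty, measure_empty]
    exact zero_le
end
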